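/- Let H be a (d,Δ)-degenerate graph with n vertices and chromatic number at most q. Let G be a graph with vertex subsets V_1,...,V_q such that for each i, |V_i| ≥ x ≥ 4n and the number of d-element subsets S of the union of V_ℓ over ℓ ≠ i with fewer than x common neighbors in V_i is less than (2Δ)^{-d} · C(x, d). Then G contains a copy of H. -/

import Mathlib

/-- A graph `G` is `(d,Δ)`-degenerate if there is an ordering `v_1,…,v_n` of its vertices such
that each `v_i` has at most `d` neighbors `v_j` with `j < i`, and there are at most `Δ` distinct
sets `S ⊆ {v_1,…,v_i}` of the form `S = N(v_j) ∩ {v_1,…,v_i}` for some neighbor `v_j` of `v_i`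
with `j > i`. -/
def DDeltaDegenerate {V : Type*} [Fintype V] (G : SimpleGraph V) (d Δ : ℕ) : Prop :=
  ∃ f : Fin (Fintype.card V) ≃ V, ∀ i : Fin (Fintype.card V),
    {j : Fin (Fintype.card V) | j < i ∧ G.Adj (f j) (f i)}.ncard ≤ d ∧
    {S : Set V | ∃ j : Fin (Fintype.card V), i < j ∧ G.Adj (f j) (f i) ∧
        S = {v : V | G.Adj (f j) v ∧ f.symm v ≤ i}}.ncard ≤ Δ


open Finset

namespace Stmt10Aux
open scoped Classical

def B1 (d Δ x e : ℕ) : ℕ := (2*Δ)^d * 3^e * x^e * (d - e).factorial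

def B2 (d Δ x e : ℕ) : ℕ := d * 4^e * Δ^e * d.factorial * (x.choose d)

lemma keyArith0 (d : ℕ) : d * 4 ^ d ≤ 6 ^ d := by
  induction d with
  | zero => simp
  | succ d ih =>
    rcases Nat.lt_or_ge d 2 with h | h
    · interval_cases d <;> norm_num
    · have h2 : 2 * (d + 1) ≤ 3 * d := by omega
      have hle : 2 * ((d+1) * 4 ^ (d+1)) ≤ 2 * 6 ^ (d+1) := by
        calc 2 * ((d+1) * 4 ^ (d+1)) = (2*(d+1)) * 4 * 4 ^ d := by ring
        _ ≤ 3 * d * 4 * 4 ^ d := by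
            exact Nat.mul_le_mul_right _ (Nat.mul_le_mul_right 4 h2)
        _ = 12 * (d * 4 ^ d) := by ring
        _ ≤ 12 * 6 ^ d := Nat.mul_le_mul_left _ ih
        _ = 2 * 6 ^ (d+1) := by ring
      omega

lemma keyArith {d e : ℕ} (he : e ≤ d) : d * 4 ^ e ≤ 2 ^ d * 3 ^ e := by
  have h1 : d * 4 ^ e * 4 ^ (d - e) = d * 4 ^ d := by
    rw [Nat.mul_assoc, ← pow_add]; congr 2; omega
  have h2 : (6:ℕ) ^ d = 2 ^ d * 3 ^ e * 3 ^ (d - e) := by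
    rw [Nat.mul_assoc, ← pow_add, show e + (d - e) = d by omega, ← Nat.mul_pow]
  have h3 : (3:ℕ) ^ (d - e) ≤ 4 ^ (d - e) := Nat.pow_le_pow_left (by norm_num) _
  have h4 : d * 4 ^ e * 4 ^ (d - e) ≤ (2 ^ d * 3 ^ e) * 4 ^ (d - e) := by
    calc d * 4 ^ e * 4 ^ (d - e) = d * 4 ^ d := h1
    _ ≤ 6 ^ d := keyArith0 d
    _ = 2 ^ d * 3 ^ e * 3 ^ (d - e) := h2
    _ ≤ (2 ^ d * 3 ^ e) * 4 ^ (d - e) := Nat.mul_le_mul_left _ h3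
  exact Nat.le_of_mul_le_mul_right h4 (Nat.pow_pos (by norm_num))

lemma arithA {x d e Δ : ℕ} (hΔ : 1 ≤ Δ) (hed : e ≤ d) (hdx : d ≤ x) :
    d * 4 ^ e * Δ ^ e * d.factorial * x.choose d ≤
      (2*Δ) ^ d * 3 ^ e * x ^ e * (d - e).factorial * ((x - e).choose (d - e)) := by
  have hce : 0 < d.choose e := Nat.choose_pos hed
  refine Nat.le_of_mul_le_mul_right ?_ hce
  have hid : x.choose d * d.choose e = x.choose e * (x - e).choose (d - e) :=
    Nat.choose_mul hed
  have hfac : d.factorial = d.choose e * e.factorial * (d - e).factorial :=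
    (Nat.choose_mul_factorial_mul_factorial hed).symm
  have hdesc : e.factorial * x.choose e ≤ x ^ e := by
    calc e.factorial * x.choose e = x.descFactorial e :=
      (Nat.descFactorial_eq_factorial_mul_choose x e).symm
    _ ≤ x ^ e := Nat.descFactorial_le_pow _ _
  have hkey : d * 4 ^ e * Δ ^ e * (e.factorial * x.choose e) ≤ (2*Δ) ^ d * 3 ^ e * x ^ e := by
    calc d * 4 ^ e * Δ ^ e * (e.factorial * x.choose e)
        ≤ d * 4 ^ e * Δ ^ e * x ^ e := Nat.mul_le_mul_left _ hdesc
    _ = (d * 4 ^ e) * Δ ^ e * x ^ e := by ring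
    _ ≤ (2 ^ d * 3 ^ e) * Δ ^ e * x ^ e := by
        exact Nat.mul_le_mul_right _ (Nat.mul_le_mul_right _ (keyArith hed))
    _ ≤ (2 ^ d * 3 ^ e) * Δ ^ d * x ^ e := by
        have : Δ ^ e ≤ Δ ^ d := Nat.pow_le_pow_right hΔ hed
        exact Nat.mul_le_mul_right _ (Nat.mul_le_mul_left _ this)
    _ = (2*Δ) ^ d * 3 ^ e * x ^ e := by rw [Nat.mul_pow]; ring
  calc d * 4 ^ e * Δ ^ e * d.factorial * x.choose d * d.choose e
      = d * 4 ^ e * Δ ^ e * d.factorial * (x.choose d * d.choose e) := by ring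
  _ = d * 4 ^ e * Δ ^ e * d.factorial * (x.choose e * (x - e).choose (d - e)) := by rw [hid]
  _ = (d * 4 ^ e * Δ ^ e * (e.factorial * x.choose e)) * (d - e).factorial
        * ((x - e).choose (d - e)) * d.choose e := by rw [hfac]; ring
  _ ≤ ((2*Δ) ^ d * 3 ^ e * x ^ e) * (d - e).factorial * ((x - e).choose (d - e)) * d.choose e := by
      exact Nat.mul_le_mul_right _ (Nat.mul_le_mul_right _ (Nat.mul_le_mul_right _ hkey))


lemma ncard_setOf {β : Type*} [Fintype β] (p : β → Prop) [DecidablePred p] :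
    {a | p a}.ncard = (univ.filter p).card := by
  rw [show {a | p a} = ↑(univ.filter p) by ext a; simp, Set.ncard_coe_finset]

lemma cntSup (U T : Finset α) (d : ℕ) (hTU : T ⊆ U) (hTd : T.card ≤ d) :
    ((U.powersetCard d).filter (fun B => T ⊆ B)).card = (U.card - T.card).choose (d - T.card) := by
  rw [show (#U - #T).choose (d - #T) = #((U \ T).powersetCard (d - #T)) by
    rw [Finset.card_powersetCard, card_sdiff_of_subset hTU]]
  apply Finset.card_bij' (fun B _ => B \ T) (fun B _ => B ∪ T)
  · intro B hB
    simp only [mem_filter, Finset.mem_powersetCard] at hB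
    obtain ⟨⟨hBU, hBc⟩, hTB⟩ := hB
    rw [Finset.mem_powersetCard]
    constructor
    · exact sdiff_subset_sdiff hBU le_rfl
    · rw [card_sdiff_of_subset hTB, hBc]
  · intro B hB
    rw [Finset.mem_powersetCard] at hB
    obtain ⟨hBU, hBc⟩ := hB
    have hdisj : Disjoint B T := by
      refine Finset.disjoint_left.2 fun a ha haT => ?_
      exact (Finset.mem_sdiff.1 (hBU ha)).2 haT
    simp only [mem_filter, Finset.mem_powersetCard]
    refine ⟨⟨?_, ?_⟩, subset_union_right⟩
    · exact union_subset ((hBU.trans (sdiff_subset)) ) hTU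
    · rw [Finset.card_union_of_disjoint hdisj, hBc]; omega
  · intro B hB
    simp only [mem_filter] at hB
    exact sdiff_union_of_subset hB.2
  · intro B hB
    rw [Finset.mem_powersetCard] at hB
    have hdisj : Disjoint B T := by
      refine Finset.disjoint_left.2 fun a ha haT => ?_
      exact (Finset.mem_sdiff.1 (hB.1 ha)).2 haT
    exact union_sdiff_cancel_right hdisj

lemma dCount (𝒮 : Finset (Finset α)) (d : ℕ) (hcard : ∀ B ∈ 𝒮, B.card = d)
    (T A : Finset α) (hA : ∀ u ∈ A, u ∉ T) :
    ∑ u ∈ A, (𝒮.filter (fun B => insert u T ⊆ B)).card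
      ≤ (d - T.card) * (𝒮.filter (fun B => T ⊆ B)).card := by
  have h1 : ∀ u ∈ A, (𝒮.filter (fun B => insert u T ⊆ B)).card
      = ∑ B ∈ 𝒮, if insert u T ⊆ B then 1 else 0 := by
    intro u _; rw [Finset.card_filter]
  rw [Finset.sum_congr rfl h1, Finset.sum_comm]
  have h2 : ∀ B ∈ 𝒮, (∑ u ∈ A, if insert u T ⊆ B then 1 else 0)
      ≤ if T ⊆ B then d - T.card else 0 := by
    intro B hB
    by_cases hTB : T ⊆ B
    · simp only [hTB, if_true]
      have : (∑ u ∈ A, if insert u T ⊆ B then 1 else 0)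
          = (A.filter (fun u => insert u T ⊆ B)).card := (Finset.card_filter _ _).symm
      rw [this]
      have hsub : A.filter (fun u => insert u T ⊆ B) ⊆ B \ T := by
        intro u hu
        simp only [mem_filter] at hu
        refine Finset.mem_sdiff.2 ⟨hu.2 (mem_insert_self u T), hA u hu.1⟩
      calc (A.filter (fun u => insert u T ⊆ B)).card ≤ (B \ T).card :=
            Finset.card_le_card hsub
      _ = d - T.card := by rw [card_sdiff_of_subset hTB, hcard B hB]
    · have : ∀ u ∈ A, (if insert u T ⊆ B then 1 else 0) = 0 := by
        intro u _
        simp only [ite_eq_right_iff]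
        intro hins
        exact absurd ((Finset.insert_subset_iff.1 hins).2) hTB
      rw [Finset.sum_congr rfl this]
      simp [hTB]
  calc ∑ B ∈ 𝒮, (∑ u ∈ A, if insert u T ⊆ B then 1 else 0)
      ≤ ∑ B ∈ 𝒮, if T ⊆ B then d - T.card else 0 := Finset.sum_le_sum h2
  _ = (d - T.card) * (𝒮.filter (fun B => T ⊆ B)).card := by
      rw [Finset.sum_ite, Finset.sum_const, Finset.sum_const]
      simp [Nat.mul_comm]


lemma invStep {d Δ x e M P : ℕ} (hΔ : 1 ≤ Δ) (he : e + 1 ≤ d) (hx : 1 ≤ x)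
    (hM : B1 d Δ x e * M < B2 d Δ x e) (hP : 3 * x * P ≤ 4 * Δ * (d - e) * M) :
    B1 d Δ x (e+1) * P < B2 d Δ x (e+1) := by
  have hfac : (d - e).factorial = (d - e) * (d - (e+1)).factorial := by
    rw [show d - e = (d - (e+1)) + 1 by omega, Nat.factorial_succ]
  have h1 : B1 d Δ x (e+1) * P = (2*Δ)^d * 3^e * x^e * (d-(e+1)).factorial * (3*x*P) := by
    unfold B1; ring
  have h2 : (2*Δ)^d * 3^e * x^e * (d-(e+1)).factorial * (4*Δ*(d-e)*M)
      = 4*Δ*(B1 d Δ x e * M) := by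
    unfold B1; rw [hfac]; ring
  calc B1 d Δ x (e+1) * P
      = (2*Δ)^d * 3^e * x^e * (d-(e+1)).factorial * (3*x*P) := h1
  _ ≤ (2*Δ)^d * 3^e * x^e * (d-(e+1)).factorial * (4*Δ*(d-e)*M) :=
      Nat.mul_le_mul_left _ hP
  _ = 4*Δ*(B1 d Δ x e * M) := h2
  _ < 4*Δ*(B2 d Δ x e) := by
      have h4 : 0 < 4*Δ := by omega
      exact (Nat.mul_lt_mul_left h4).2 hM
  _ = B2 d Δ x (e+1) := by unfold B2; ring


section Main
variable {V W : Type*} [Fintype V] [Fintype W]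
variable (H : SimpleGraph W) (G : SimpleGraph V) (q d Δ x : ℕ)
variable (Vs : Fin q → Finset V) (f : Fin (Fintype.card W) ≃ W) (c : W → Fin q)

noncomputable def Bd (γ : Fin q) : Finset (Finset V) :=
  univ.filter (fun B => B.card = d ∧ (∀ v ∈ B, ∃ ℓ, ℓ ≠ γ ∧ v ∈ Vs ℓ) ∧
    ((Vs γ).filter (fun u => ∀ v ∈ B, G.Adj u v)).card < x)

noncomputable def Nc (γ : Fin q) (T : Finset V) : ℕ :=
  ((Bd G q d x Vs γ).filter (fun B => T ⊆ B)).card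

noncomputable def SS (m : ℕ) (k : Fin (Fintype.card W)) : Finset (Fin (Fintype.card W)) :=
  univ.filter (fun j => (j : ℕ) < m ∧ H.Adj (f j) (f k))

noncomputable def RS (m : ℕ) (S' : Finset (Fin (Fintype.card W))) : Finset (Fin q) :=
  (univ.filter (fun k' : Fin (Fintype.card W) => m ≤ (k' : ℕ) ∧ SS H f m k' = S')).image (fun k' => c (f k'))

noncomputable def MM (g : Fin (Fintype.card W) → V) (m : ℕ) (k : Fin (Fintype.card W)) : ℕ :=
  ∑ γ' ∈ RS H q f c m (SS H f m k), Nc G q d x Vs γ' ((SS H f m k).image g)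

noncomputable def Inv (g : Fin (Fintype.card W) → V) (m : ℕ) : Prop :=
  (∀ j k : Fin (Fintype.card W), (j:ℕ) < m → (k:ℕ) < m → g j = g k → j = k) ∧
  (∀ j k : Fin (Fintype.card W), (j:ℕ) < m → (k:ℕ) < m → H.Adj (f j) (f k) →
    G.Adj (g j) (g k)) ∧
  (∀ j : Fin (Fintype.card W), (j:ℕ) < m → g j ∈ Vs (c (f j))) ∧
  (∀ k : Fin (Fintype.card W), m ≤ (k:ℕ) → 1 ≤ (SS H f m k).card →
    B1 d Δ x (SS H f m k).card * MM H G q d x Vs f c g m k < B2 d Δ x (SS H f m k).card)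

lemma Scard_le (hdeg1 : ∀ k, {j | j < k ∧ H.Adj (f j) (f k)}.ncard ≤ d)
    (m : ℕ) (k : Fin (Fintype.card W)) (hmk : m ≤ (k:ℕ)+1) : (SS H f m k).card ≤ d := by
  have hsub : (SS H f m k : Set (Fin (Fintype.card W))) ⊆ {j | j < k ∧ H.Adj (f j) (f k)} := by
    intro j hj
    simp only [SS, coe_filter, Set.mem_setOf_eq, mem_univ, true_and] at hj
    refine ⟨?_, hj.2⟩
    have hjk : j ≠ k := fun h => H.irrefl (h ▸ hj.2)
    have : (j:ℕ) ≤ (k:ℕ) := by omega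
    have hne : (j:ℕ) ≠ (k:ℕ) := fun h => hjk (Fin.ext h)
    exact Fin.lt_def.2 (by omega)
  calc (SS H f m k).card = (SS H f m k : Set (Fin (Fintype.card W))).ncard :=
        (Set.ncard_coe_finset _).symm
  _ ≤ {j | j < k ∧ H.Adj (f j) (f k)}.ncard := Set.ncard_le_ncard hsub (Set.toFinite _)
  _ ≤ d := hdeg1 k

lemma step
    (hd : 1 ≤ d) (hΔ : 1 ≤ Δ) (hdx : d ≤ x) (hxc : 4 * Fintype.card W ≤ x)
    (hW1 : 1 ≤ Fintype.card W)
    (hsize : ∀ i, x ≤ (Vs i).card)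
    (hbad' : ∀ γ, (2*Δ)^d * (Bd G q d x Vs γ).card < x.choose d)
    (hdeg1 : ∀ k, {j | j < k ∧ H.Adj (f j) (f k)}.ncard ≤ d)
    (hdeg2 : ∀ i : Fin (Fintype.card W), {S : Set W | ∃ j, i < j ∧ H.Adj (f j) (f i) ∧
        S = {v : W | H.Adj (f j) v ∧ f.symm v ≤ i}}.ncard ≤ Δ)
    (hcolp : ∀ a b, H.Adj a b → c a ≠ c b)
    (himc : ((univ : Finset W).image c).card ≤ d+1)
    (g : Fin (Fintype.card W) → V) (m : ℕ) (hm : m < Fintype.card W)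
    (hInv : Inv H G q d Δ x Vs f c g m) :
    ∃ g', Inv H G q d Δ x Vs f c g' (m+1) := by
  classical
  obtain ⟨hinj, hadjp, hmem, hinv⟩ := hInv
  have hx1 : 1 ≤ x := le_trans hd hdx
  have hK1 : 1 ≤ x.choose d := Nat.choose_pos hdx
  set i : Fin (Fintype.card W) := ⟨m, hm⟩ with hidef
  have hiv : (i : ℕ) = m := rfl
  set γ := c (f i) with hγdef
  set Ti : Finset V := (SS H f m i).image g with hTidef
  set ei := (SS H f m i).card with heidef
  -- images of S-sets have full cardinality
  have himgcard : ∀ k : Fin (Fintype.card W), ((SS H f m k).image g).card = (SS H f m k).card := by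
    intro k
    apply Finset.card_image_of_injOn
    intro a ha b hb hab
    simp only [SS, mem_coe, mem_filter, mem_univ, true_and] at ha hb
    exact hinj a b ha.1 hb.1 hab
  have heid : ei ≤ d := Scard_le H d f hdeg1 m i (by omega)
  -- erasing i from the (m+1)-prefix neighbourhood gives the m-prefix neighbourhood
  have hSerase : ∀ k : Fin (Fintype.card W), (SS H f (m+1) k).erase i = SS H f m k := by
    intro k
    ext j
    simp only [mem_erase, SS, mem_filter, mem_univ, true_and]
    constructor
    · rintro ⟨hne, hlt, hadj⟩
      have : (j:ℕ) ≠ m := fun h => hne (Fin.ext h)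
      exact ⟨by omega, hadj⟩
    · rintro ⟨hlt, hadj⟩
      exact ⟨fun h => by rw [h] at hlt; omega, by omega, hadj⟩
  have hSneq : ∀ k : Fin (Fintype.card W), ¬ H.Adj (f i) (f k) → SS H f (m+1) k = SS H f m k := by
    intro k hne
    ext j
    simp only [SS, mem_filter, mem_univ, true_and]
    constructor
    · rintro ⟨hlt, hadj⟩
      rcases Nat.lt_or_ge (j:ℕ) m with h | h
      · exact ⟨h, hadj⟩
      · have : j = i := Fin.ext (by simp [hidef]; omega)
        rw [this] at hadj
        exact absurd hadj hne
    · rintro ⟨hlt, hadj⟩; exact ⟨by omega, hadj⟩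
  have hiS : ∀ k : Fin (Fintype.card W), H.Adj (f i) (f k) → i ∈ SS H f (m+1) k := by
    intro k hadj
    simp only [SS, mem_filter, mem_univ, true_and]
    exact ⟨by omega, hadj⟩
  -- the candidate set is large
  set Cand : Finset V := (Vs γ).filter (fun u => ∀ v ∈ Ti, G.Adj u v) with hCanddef
  have hCandx : x ≤ Cand.card := by
    rcases Nat.eq_zero_or_pos ei with he0 | he1
    · have hS0 : SS H f m i = ∅ := Finset.card_eq_zero.1 he0
      have hTi0 : Ti = ∅ := by rw [hTidef, hS0]; simp
      have hCeq : Cand = Vs γ := by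
        rw [hCanddef, hTi0]
        apply Finset.filter_true_of_mem
        intro u _ v hv
        exact absurd hv (Finset.notMem_empty v)
      rw [hCeq]; exact hsize γ
    · set UF : Finset V := univ.filter (fun v => ∃ ℓ, ℓ ≠ γ ∧ v ∈ Vs ℓ) with hUFdef
      obtain ⟨j₀, hj₀⟩ := Finset.card_pos.1 he1
      have hj₀' : (j₀:ℕ) < m ∧ H.Adj (f j₀) (f i) := by
        simpa [SS] using hj₀
      have hl0 : c (f j₀) ≠ γ := hcolp _ _ hj₀'.2
      have hUFx : x ≤ UF.card := by
        refine le_trans (hsize (c (f j₀))) (Finset.card_le_card ?_)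
        intro v hv
        simp only [hUFdef, mem_filter, mem_univ, true_and]
        exact ⟨_, hl0, hv⟩
      have hTU : Ti ⊆ UF := by
        intro v hv
        rw [hTidef] at hv
        obtain ⟨j, hj, rfl⟩ := Finset.mem_image.1 hv
        have hj2 : (j:ℕ) < m ∧ H.Adj (f j) (f i) := by simpa [SS] using hj
        simp only [hUFdef, mem_filter, mem_univ, true_and]
        exact ⟨c (f j), hcolp _ _ hj2.2, hmem j hj2.1⟩
      have hTicard : Ti.card = ei := himgcard i
      have hγR : γ ∈ RS H q f c m (SS H f m i) := by
        apply Finset.mem_image_of_mem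
        refine Finset.mem_filter.2 ⟨Finset.mem_univ i, ⟨?_, rfl⟩⟩
        omega
      have hNcM : Nc G q d x Vs γ Ti ≤ MM H G q d x Vs f c g m i := by
        rw [hTidef]
        unfold MM
        exact Finset.single_le_sum
          (f := fun γ' => Nc G q d x Vs γ' ((SS H f m i).image g))
          (fun _ _ => Nat.zero_le _) hγR
      have hBM := hinv i (by omega) he1
      have hNclt : Nc G q d x Vs γ Ti < (x - ei).choose (d - ei) := by
        have h1 : B1 d Δ x ei * Nc G q d x Vs γ Ti < B2 d Δ x ei :=
          lt_of_le_of_lt (Nat.mul_le_mul_left _ hNcM) hBM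
        have h2 : B2 d Δ x ei ≤ B1 d Δ x ei * ((x-ei).choose (d-ei)) := by
          unfold B1 B2; exact arithA hΔ heid hdx
        exact Nat.lt_of_mul_lt_mul_left (lt_of_lt_of_le h1 h2)
      have hsup : ((UF.powersetCard d).filter (fun B => Ti ⊆ B)).card
          = (UF.card - ei).choose (d - ei) := by
        rw [cntSup UF Ti d hTU (by rw [hTicard]; exact heid), hTicard]
      have hex : ∃ B ∈ (UF.powersetCard d).filter (fun B => Ti ⊆ B),
          B ∉ Bd G q d x Vs γ := by
        by_contra hall
        push_neg at hall
        have hsub : (UF.powersetCard d).filter (fun B => Ti ⊆ B) ⊆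
            (Bd G q d x Vs γ).filter (fun B => Ti ⊆ B) := by
          intro B hB
          have hB' := hB
          simp only [mem_filter] at hB' ⊢
          exact ⟨hall B hB, hB'.2⟩
        have hcle := Finset.card_le_card hsub
        rw [hsup] at hcle
        have hchle : (x - ei).choose (d-ei) ≤ (UF.card - ei).choose (d-ei) :=
          Nat.choose_le_choose _ (by omega)
        have : Nc G q d x Vs γ Ti = ((Bd G q d x Vs γ).filter (fun B => Ti ⊆ B)).card := rfl
        omega
      obtain ⟨B, hBmem, hBnotbad⟩ := hex
      simp only [mem_filter, Finset.mem_powersetCard] at hBmem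
      obtain ⟨⟨hBU, hBcard⟩, hTB⟩ := hBmem
      have hBin : ∀ v ∈ B, ∃ ℓ, ℓ ≠ γ ∧ v ∈ Vs ℓ := by
        intro v hv
        have := hBU hv
        simpa [hUFdef] using this
      have hBgood : x ≤ ((Vs γ).filter (fun u => ∀ v ∈ B, G.Adj u v)).card := by
        by_contra hlt
        refine hBnotbad ?_
        simp only [Bd, mem_filter, mem_univ, true_and]
        exact ⟨hBcard, hBin, by omega⟩
      refine le_trans hBgood (Finset.card_le_card ?_)
      intro w hw
      simp only [mem_filter] at hw
      rw [hCanddef]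
      simp only [mem_filter]
      exact ⟨hw.1, fun v hv => hw.2 v (hTB hv)⟩
  -- the classes
  set CT : Finset (Finset (Fin (Fintype.card W))) :=
    (univ.filter (fun k : Fin (Fintype.card W) => m+1 ≤ (k:ℕ) ∧ H.Adj (f i) (f k))).image
      (fun k => SS H f (m+1) k) with hCTdef
  have hCTΔ : CT.card ≤ Δ := by
    classical
    set ψ : Finset (Fin (Fintype.card W)) → Set W := fun A => (f '' (A : Set (Fin (Fintype.card W)))) with hψdef
    have hψinj : Function.Injective ψ := by
      intro A B hAB
      simp only [hψdef] at hAB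
      exact Finset.coe_injective ((Set.image_injective.2 f.injective) hAB)
    have h1 : CT.card = (CT.image ψ).card := (Finset.card_image_of_injective _ hψinj).symm
    have h2 : ((CT.image ψ : Finset (Set W)) : Set (Set W)) ⊆
        {S : Set W | ∃ j, i < j ∧ H.Adj (f j) (f i) ∧ S = {v : W | H.Adj (f j) v ∧ f.symm v ≤ i}} := by
      intro Sw hSw
      simp only [Finset.coe_image, Set.mem_image, Finset.mem_coe] at hSw
      obtain ⟨S', hS', rfl⟩ := hSw
      rw [hCTdef] at hS'
      obtain ⟨k, hk, rfl⟩ := Finset.mem_image.1 hS'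
      simp only [mem_filter, mem_univ, true_and] at hk
      refine ⟨k, ?_, hk.2.symm, ?_⟩
      · exact Fin.lt_def.2 (by omega)
      · ext v
        simp only [hψdef, Set.mem_image, Finset.mem_coe, Set.mem_setOf_eq]
        constructor
        · rintro ⟨j, hj, rfl⟩
          simp only [SS, mem_filter, mem_univ, true_and] at hj
          refine ⟨hj.2.symm, ?_⟩
          rw [Equiv.symm_apply_apply]
          exact Fin.le_def.2 (by simp [hidef]; omega)
        · rintro ⟨hadj, hle⟩
          refine ⟨f.symm v, ?_, by simp⟩
          simp only [SS, mem_filter, mem_univ, true_and]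
          have hle' : (f.symm v : ℕ) ≤ m := by
            have := Fin.le_def.1 hle
            simpa [hidef] using this
          exact ⟨by omega, by simpa using hadj.symm⟩
    calc CT.card = (CT.image ψ).card := h1
    _ = ((CT.image ψ : Finset (Set W)) : Set (Set W)).ncard := (Set.ncard_coe_finset _).symm
    _ ≤ {S : Set W | ∃ j, i < j ∧ H.Adj (f j) (f i) ∧
          S = {v : W | H.Adj (f j) v ∧ f.symm v ≤ i}}.ncard :=
        Set.ncard_le_ncard h2 (Set.toFinite _)
    _ ≤ Δ := hdeg2 i
  set Tpre : Finset (Fin (Fintype.card W)) → Finset V := fun S' => (S'.erase i).image g with hTpredef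
  set eS : Finset (Fin (Fintype.card W)) → ℕ := fun S' => (S'.erase i).card with heSdef
  set Mold : Finset (Fin (Fintype.card W)) → ℕ :=
    fun S' => ∑ γ' ∈ RS H q f c (m+1) S', Nc G q d x Vs γ' (Tpre S') with hMolddef
  set PP : Finset (Fin (Fintype.card W)) → V → ℕ :=
    fun S' u => ∑ γ' ∈ RS H q f c (m+1) S', Nc G q d x Vs γ' (insert u (Tpre S')) with hPPdef
  set Dang : Finset (Fin (Fintype.card W)) → Finset V :=
    fun S' => Cand.filter (fun u => u ∉ Tpre S' ∧
      4*Δ*(d - eS S') * Mold S' < 3*x*(PP S' u)) with hDangdef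
  have classFacts : ∀ S' ∈ CT, i ∈ S' ∧ S'.card = eS S' + 1 ∧ eS S' + 1 ≤ d ∧
      (∀ j ∈ S'.erase i, (j:ℕ) < m) ∧
      B1 d Δ x (eS S') * Mold S' < B2 d Δ x (eS S') := by
    intro S' hS'
    rw [hCTdef] at hS'
    obtain ⟨k, hk, hSk⟩ := Finset.mem_image.1 hS'
    simp only [mem_filter, mem_univ, true_and] at hk
    obtain ⟨hk1, hk2⟩ := hk
    subst hSk
    have hiS' : i ∈ SS H f (m+1) k := hiS k hk2
    have her : (SS H f (m+1) k).erase i = SS H f m k := hSerase k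
    have hcard : (SS H f (m+1) k).card = eS (SS H f (m+1) k) + 1 := by
      simp only [heSdef]
      rw [Finset.card_erase_of_mem hiS']
      have h1 : 1 ≤ (SS H f (m+1) k).card := Finset.card_pos.2 ⟨i, hiS'⟩
      omega
    have hed : eS (SS H f (m+1) k) + 1 ≤ d := by
      rw [← hcard]
      exact Scard_le H d f hdeg1 (m+1) k (by omega)
    refine ⟨hiS', hcard, hed, ?_, ?_⟩
    · intro j hj
      rw [her] at hj
      simp only [SS, mem_filter, mem_univ, true_and] at hj
      exact hj.1
    have hTpre : Tpre (SS H f (m+1) k) = (SS H f m k).image g := by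
      simp only [hTpredef, her]
    have heq : eS (SS H f (m+1) k) = (SS H f m k).card := by
      simp only [heSdef, her]
    rcases Nat.eq_zero_or_pos (SS H f m k).card with h0 | h1
    · -- base case : no embedded neighbours yet
      have hS0 : SS H f m k = ∅ := Finset.card_eq_zero.1 h0
      have hT0 : Tpre (SS H f (m+1) k) = ∅ := by rw [hTpre, hS0]; simp
      have hRS : RS H q f c (m+1) (SS H f (m+1) k) ⊆ (univ.image c).erase γ := by
        intro γ' hγ'
        obtain ⟨k', hk', rfl⟩ := Finset.mem_image.1 hγ'
        simp only [mem_filter, mem_univ, true_and] at hk'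
        have hik' : i ∈ SS H f (m+1) k' := hk'.2 ▸ hiS'
        have hadj' : H.Adj (f i) (f k') := by
          simp only [SS, mem_filter, mem_univ, true_and] at hik'
          exact hik'.2
        refine Finset.mem_erase.2 ⟨?_, Finset.mem_image_of_mem c (Finset.mem_univ _)⟩
        exact fun hcc => (hcolp _ _ hadj') hcc.symm
      have hRScard : (RS H q f c (m+1) (SS H f (m+1) k)).card ≤ d := by
        calc (RS H q f c (m+1) (SS H f (m+1) k)).card
            ≤ ((univ.image c).erase γ).card := Finset.card_le_card hRS
        _ = (univ.image c).card - 1 :=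
            Finset.card_erase_of_mem (Finset.mem_image_of_mem c (Finset.mem_univ _))
        _ ≤ d := by omega
      have hterm : ∀ γ' ∈ RS H q f c (m+1) (SS H f (m+1) k),
          (2*Δ)^d * Nc G q d x Vs γ' (Tpre (SS H f (m+1) k)) ≤ x.choose d - 1 := by
        intro γ' _
        have hNcB : Nc G q d x Vs γ' (Tpre (SS H f (m+1) k)) = (Bd G q d x Vs γ').card := by
          rw [hT0]
          unfold Nc
          congr 1
          apply Finset.filter_true_of_mem
          intro B _
          exact Finset.empty_subset B
        rw [hNcB]
        have := hbad' γ'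
        omega
      have hMold : (2*Δ)^d * Mold (SS H f (m+1) k) ≤ d * (x.choose d - 1) := by
        simp only [hMolddef]
        rw [Finset.mul_sum]
        calc ∑ γ' ∈ RS H q f c (m+1) (SS H f (m+1) k),
              (2*Δ)^d * Nc G q d x Vs γ' (Tpre (SS H f (m+1) k))
            ≤ ∑ _γ' ∈ RS H q f c (m+1) (SS H f (m+1) k), (x.choose d - 1) :=
              Finset.sum_le_sum hterm
        _ = (RS H q f c (m+1) (SS H f (m+1) k)).card * (x.choose d - 1) := by
            rw [Finset.sum_const, smul_eq_mul]
        _ ≤ d * (x.choose d - 1) := Nat.mul_le_mul_right _ hRScard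
      have he0 : eS (SS H f (m+1) k) = 0 := by rw [heq, h0]
      rw [he0]
      have hB1 : B1 d Δ x 0 = (2*Δ)^d * d.factorial := by simp [B1]
      have hB2 : B2 d Δ x 0 = d * d.factorial * (x.choose d) := by simp [B2]
      rw [hB1, hB2]
      calc (2*Δ)^d * d.factorial * Mold (SS H f (m+1) k)
          = d.factorial * ((2*Δ)^d * Mold (SS H f (m+1) k)) := by ring
      _ ≤ d.factorial * (d * (x.choose d - 1)) := Nat.mul_le_mul_left _ hMold
      _ < d * d.factorial * (x.choose d) := by
          have hfp := Nat.factorial_pos d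
          have hlt : d * (x.choose d - 1) < d * (x.choose d) := by
            have : x.choose d - 1 < x.choose d := by omega
            exact Nat.mul_lt_mul_left (by omega) |>.2 this
          calc d.factorial * (d * (x.choose d - 1))
              < d.factorial * (d * (x.choose d)) := (Nat.mul_lt_mul_left hfp).2 hlt
          _ = d * d.factorial * (x.choose d) := by ring
    · -- inductive case : use the invariant at k
      have hRS2 : RS H q f c (m+1) (SS H f (m+1) k) ⊆ RS H q f c m (SS H f m k) := by
        intro γ' hγ'
        obtain ⟨k', hk', rfl⟩ := Finset.mem_image.1 hγ'
        simp only [mem_filter, mem_univ, true_and] at hk'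
        apply Finset.mem_image_of_mem
        refine Finset.mem_filter.2 ⟨Finset.mem_univ _, ⟨by omega, ?_⟩⟩
        have h3 : SS H f m k' = (SS H f (m+1) k').erase i := (hSerase k').symm
        rw [h3, hk'.2, her]
      have hMle : Mold (SS H f (m+1) k) ≤ MM H G q d x Vs f c g m k := by
        simp only [hMolddef, hTpre]
        unfold MM
        exact Finset.sum_le_sum_of_subset hRS2
      have hinvk := hinv k (by omega) h1
      rw [heq]
      exact lt_of_le_of_lt (Nat.mul_le_mul_left _ hMle) hinvk
  have dangCard : ∀ S' ∈ CT, 4*Δ*(Dang S').card ≤ 3*x - 1 := by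
    intro S' hS'
    obtain ⟨hiS', hcardS, hed, hltm, hMb⟩ := classFacts S' hS'
    have hTpcard : (Tpre S').card = eS S' := by
      simp only [hTpredef, heSdef]
      apply Finset.card_image_of_injOn
      intro a ha b hb hab
      exact hinj a b (hltm a ha) (hltm b hb) hab
    have hsum : ∑ u ∈ Dang S', PP S' u ≤ (d - eS S') * Mold S' := by
      simp only [hPPdef, hMolddef]
      rw [Finset.sum_comm, Finset.mul_sum]
      apply Finset.sum_le_sum
      intro γ' _
      have hcBd : ∀ B ∈ Bd G q d x Vs γ', B.card = d := by
        intro B hB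
        simp only [Bd, mem_filter, mem_univ, true_and] at hB
        exact hB.1
      have hnotin : ∀ u ∈ Dang S', u ∉ Tpre S' := by
        intro u hu
        simp only [hDangdef, mem_filter] at hu
        exact hu.2.1
      have := dCount (Bd G q d x Vs γ') d hcBd (Tpre S') (Dang S') hnotin
      rw [hTpcard] at this
      exact this
    by_cases hD0 : (Dang S').card = 0
    · rw [hD0]
      omega
    · have hDpos : 0 < (Dang S').card := Nat.pos_of_ne_zero hD0
      have hM1 : 1 ≤ Mold S' := by
        by_contra hM0
        push_neg at hM0
        have hM0' : Mold S' = 0 := by omega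
        obtain ⟨u, hu⟩ := Finset.card_pos.1 hDpos
        have hPu : PP S' u ≤ (d - eS S') * Mold S' := by
          refine le_trans ?_ hsum
          exact Finset.single_le_sum (fun _ _ => Nat.zero_le _) hu
        have hmemu := hu
        simp only [hDangdef, mem_filter] at hmemu
        have h3 := hmemu.2.2
        rw [hM0'] at hPu
        simp only [Nat.mul_zero] at hPu
        have hP0 : PP S' u = 0 := by omega
        rw [hP0, hM0'] at h3
        simp at h3
      have hlower : ∀ u ∈ Dang S', 4*Δ*(d - eS S')*Mold S' + 1 ≤ 3*x*(PP S' u) := by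
        intro u hu
        simp only [hDangdef, mem_filter] at hu
        exact hu.2.2
      have hmain : (Dang S').card * (4*Δ*(d - eS S')*Mold S' + 1)
          ≤ 3*x*((d - eS S')*Mold S') := by
        calc (Dang S').card * (4*Δ*(d - eS S')*Mold S' + 1)
            = ∑ _u ∈ Dang S', (4*Δ*(d - eS S')*Mold S' + 1) := by
              rw [Finset.sum_const, smul_eq_mul]
        _ ≤ ∑ u ∈ Dang S', 3*x*(PP S' u) := Finset.sum_le_sum hlower
        _ = 3*x * ∑ u ∈ Dang S', PP S' u := by rw [Finset.mul_sum]
        _ ≤ 3*x*((d - eS S')*Mold S') := Nat.mul_le_mul_left _ hsum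
      have hde1 : 1 ≤ d - eS S' := by omega
      have h2 : (Dang S').card * (4*Δ) * ((d - eS S')*Mold S')
          < 3*x*((d - eS S')*Mold S') := by
        calc (Dang S').card * (4*Δ) * ((d - eS S')*Mold S')
            = (Dang S').card * (4*Δ*(d - eS S')*Mold S') := by ring
        _ < (Dang S').card * (4*Δ*(d - eS S')*Mold S' + 1) :=
            (Nat.mul_lt_mul_left hDpos).2 (by omega)
        _ ≤ 3*x*((d - eS S')*Mold S') := hmain
      have hfin : (Dang S').card * (4*Δ) < 3*x := Nat.lt_of_mul_lt_mul_right h2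
      have hco : 4*Δ*(Dang S').card = (Dang S').card * (4*Δ) := by ring
      rw [hco]
      omega
  set Used : Finset V := (univ.filter (fun j : Fin (Fintype.card W) => (j:ℕ) < m)).image g
    with hUseddef
  have hUsedm : Used.card ≤ m := by
    calc Used.card ≤ (univ.filter (fun j : Fin (Fintype.card W) => (j:ℕ) < m)).card :=
          Finset.card_image_le
    _ ≤ (Finset.range m).card := by
        exact Finset.card_le_card_of_injOn (fun j => (j:ℕ))
          (fun j hj => by simp only [mem_coe, mem_filter] at hj; simp [hj.2])
          (fun a _ b _ hab => Fin.ext hab)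
    _ = m := Finset.card_range m
  have hEx : ∃ u, u ∈ Cand ∧ u ∉ Used ∧ ∀ S' ∈ CT, u ∉ Dang S' := by
    have hbiU : (CT.biUnion Dang).card ≤ (3*x-1)/4 := by
      calc (CT.biUnion Dang).card ≤ ∑ S' ∈ CT, (Dang S').card := Finset.card_biUnion_le
      _ ≤ CT.card * ((3*x-1)/(4*Δ)) := by
          apply Finset.sum_le_card_nsmul
          intro S' hS'
          rw [Nat.le_div_iff_mul_le (by omega : 0 < 4*Δ)]
          calc (Dang S').card * (4*Δ) = 4*Δ*(Dang S').card := Nat.mul_comm _ _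
          _ ≤ 3*x-1 := dangCard S' hS'
      _ ≤ Δ * ((3*x-1)/4/Δ) := by
          rw [Nat.div_div_eq_div_mul]
          exact Nat.mul_le_mul_right _ hCTΔ
      _ ≤ (3*x-1)/4 := Nat.mul_div_le _ _
    have hcard : (Used ∪ CT.biUnion Dang).card < Cand.card := by
      have h1 : (Used ∪ CT.biUnion Dang).card ≤ Used.card + (CT.biUnion Dang).card :=
        Finset.card_union_le _ _
      have h2 : (3*x-1)/4 * 4 ≤ 3*x-1 := Nat.div_mul_le_self _ _
      have h3 : m + 1 ≤ Fintype.card W := hm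
      omega
    have hns : ¬ Cand ⊆ Used ∪ CT.biUnion Dang := by
      intro hsub
      exact absurd (Finset.card_le_card hsub) (by omega)
    obtain ⟨u, hu, hnu⟩ := Finset.not_subset.1 hns
    refine ⟨u, hu, ?_, ?_⟩
    · intro h; exact hnu (Finset.mem_union_left _ h)
    · intro S' hS' h
      exact hnu (Finset.mem_union_right _ (Finset.mem_biUnion.2 ⟨S', hS', h⟩))
  obtain ⟨u, huC, huU, huD⟩ := hEx
  set g' := Function.update g i u with hg'def
  have hg'lt : ∀ j : Fin (Fintype.card W), (j:ℕ) < m → g' j = g j := by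
    intro j hj
    apply Function.update_of_ne
    intro h; rw [h] at hj; simp [hidef] at hj
  have hg'i : g' i = u := Function.update_self _ _ _
  refine ⟨g', ?_, ?_, ?_, ?_⟩
  · -- injectivity
    intro j k hj hk hjk
    rcases Nat.lt_or_ge (j:ℕ) m with hjm | hjm <;> rcases Nat.lt_or_ge (k:ℕ) m with hkm | hkm
    · rw [hg'lt j hjm, hg'lt k hkm] at hjk
      exact hinj j k hjm hkm hjk
    · exfalso
      have hki : k = i := Fin.ext (by simp only [hidef, Fin.val_mk]; omega)
      rw [hg'lt j hjm, hki, hg'i] at hjk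
      apply huU
      rw [hUseddef]
      exact Finset.mem_image.2 ⟨j, Finset.mem_filter.2 ⟨Finset.mem_univ _, hjm⟩, hjk⟩
    · exfalso
      have hji : j = i := Fin.ext (by simp only [hidef, Fin.val_mk]; omega)
      rw [hg'lt k hkm, hji, hg'i] at hjk
      apply huU
      rw [hUseddef]
      exact Finset.mem_image.2 ⟨k, Finset.mem_filter.2 ⟨Finset.mem_univ _, hkm⟩, hjk.symm⟩
    · have hji : j = i := Fin.ext (by simp only [hidef, Fin.val_mk]; omega)
      have hki : k = i := Fin.ext (by simp only [hidef, Fin.val_mk]; omega)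
      rw [hji, hki]
  · -- adjacency
    intro j k hj hk hadjjk
    have hCmem := Finset.mem_filter.1 huC
    rcases Nat.lt_or_ge (j:ℕ) m with hjm | hjm <;> rcases Nat.lt_or_ge (k:ℕ) m with hkm | hkm
    · rw [hg'lt j hjm, hg'lt k hkm]
      exact hadjp j k hjm hkm hadjjk
    · have hki : k = i := Fin.ext (by simp only [hidef, Fin.val_mk]; omega)
      subst hki
      rw [hg'lt j hjm, hg'i]
      have hjS : g j ∈ Ti := by
        rw [hTidef]
        refine Finset.mem_image_of_mem g (Finset.mem_filter.2 ⟨Finset.mem_univ _, hjm, ?_⟩)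
        exact hadjjk
      exact (hCmem.2 (g j) hjS).symm
    · have hji : j = i := Fin.ext (by simp only [hidef, Fin.val_mk]; omega)
      subst hji
      rw [hg'lt k hkm, hg'i]
      have hkS : g k ∈ Ti := by
        rw [hTidef]
        refine Finset.mem_image_of_mem g (Finset.mem_filter.2 ⟨Finset.mem_univ _, hkm, ?_⟩)
        exact hadjjk.symm
      exact hCmem.2 (g k) hkS
    · have hji : j = i := Fin.ext (by simp only [hidef, Fin.val_mk]; omega)
      have hki : k = i := Fin.ext (by simp only [hidef, Fin.val_mk]; omega)
      subst hji; subst hki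
      exact absurd hadjjk (H.irrefl)
  · -- membership
    intro j hj
    rcases Nat.lt_or_ge (j:ℕ) m with hjm | hjm
    · rw [hg'lt j hjm]
      exact hmem j hjm
    · have hji : j = i := Fin.ext (by simp only [hidef, Fin.val_mk]; omega)
      subst hji
      rw [hg'i]
      exact (Finset.mem_filter.1 huC).1
  · -- the counting invariant
    intro k hk hSk1
    by_cases hadjk : H.Adj (f i) (f k)
    · -- k is a later neighbour of i
      have hS'CT : SS H f (m+1) k ∈ CT := by
        rw [hCTdef]
        exact Finset.mem_image_of_mem _
          (Finset.mem_filter.2 ⟨Finset.mem_univ _, hk, hadjk⟩)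
      obtain ⟨hiS', hcardS, hedS, hltm, hMb⟩ := classFacts _ hS'CT
      have hins : (SS H f (m+1) k).image g' = insert u (Tpre (SS H f (m+1) k)) := by
        calc (SS H f (m+1) k).image g'
            = (insert i ((SS H f (m+1) k).erase i)).image g' := by
              rw [Finset.insert_erase hiS']
        _ = insert (g' i) (((SS H f (m+1) k).erase i).image g') := Finset.image_insert _ _ _
        _ = insert u (((SS H f (m+1) k).erase i).image g) := by
            rw [hg'i]
            congr 1
            apply Finset.image_congr
            intro a ha
            exact hg'lt a (hltm a ha)
        _ = insert u (Tpre (SS H f (m+1) k)) := by simp only [hTpredef]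
      have hMMeq : MM H G q d x Vs f c g' (m+1) k = PP (SS H f (m+1) k) u := by
        unfold MM
        simp only [hPPdef]
        rw [hins]
      have hund := huD _ hS'CT
      have huT : u ∉ Tpre (SS H f (m+1) k) := by
        intro hin
        apply huU
        simp only [hTpredef] at hin
        obtain ⟨a, ha, hae⟩ := Finset.mem_image.1 hin
        rw [hUseddef]
        exact Finset.mem_image.2 ⟨a,
          Finset.mem_filter.2 ⟨Finset.mem_univ _, hltm a ha⟩, hae⟩
      have hPle : 3*x*(PP (SS H f (m+1) k) u) ≤ 4*Δ*(d - eS (SS H f (m+1) k))*Mold (SS H f (m+1) k) := by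
        by_contra hgt
        push_neg at hgt
        apply hund
        rw [hDangdef]
        exact Finset.mem_filter.2 ⟨huC, huT, hgt⟩
      rw [hcardS, hMMeq]
      exact invStep hΔ hedS hx1 hMb hPle
    · -- k is not a neighbour of i : nothing changes
      have hSeq : SS H f (m+1) k = SS H f m k := hSneq k hadjk
      have hTeq : (SS H f (m+1) k).image g' = (SS H f m k).image g := by
        rw [hSeq]
        apply Finset.image_congr
        intro a ha
        simp only [SS, Finset.coe_filter, Set.mem_setOf_eq, mem_univ, true_and] at ha
        exact hg'lt a ha.1
      have hRSle : RS H q f c (m+1) (SS H f (m+1) k) ⊆ RS H q f c m (SS H f m k) := by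
        intro γ' hγ'
        obtain ⟨k', hk', rfl⟩ := Finset.mem_image.1 hγ'
        simp only [mem_filter, mem_univ, true_and] at hk'
        apply Finset.mem_image_of_mem
        refine Finset.mem_filter.2 ⟨Finset.mem_univ _, by omega, ?_⟩
        have h3 : SS H f m k' = (SS H f (m+1) k').erase i := (hSerase k').symm
        rw [h3, hk'.2]
        exact hSerase k
      have hMM2 : MM H G q d x Vs f c g' (m+1) k ≤ MM H G q d x Vs f c g m k := by
        unfold MM
        have hRSle' := hRSle
        rw [hSeq] at hRSle'
        rw [hTeq, hSeq]
        exact Finset.sum_le_sum_of_subset hRSle'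

      have hck : (SS H f (m+1) k).card = (SS H f m k).card := by rw [hSeq]
      rw [hck]
      have hinvk := hinv k (by omega) (by rw [← hck]; exact hSk1)
      exact lt_of_le_of_lt (Nat.mul_le_mul_left _ hMM2) hinvk


lemma main
    (hd : 1 ≤ d) (hΔ : 1 ≤ Δ) (hdx : d ≤ x) (hxc : 4 * Fintype.card W ≤ x)
    (hW1 : 1 ≤ Fintype.card W)
    (hsize : ∀ i, x ≤ (Vs i).card)
    (hbad' : ∀ γ, (2*Δ)^d * (Bd G q d x Vs γ).card < x.choose d)
    (hdeg1 : ∀ k, {j | j < k ∧ H.Adj (f j) (f k)}.ncard ≤ d)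
    (hdeg2 : ∀ i : Fin (Fintype.card W), {S : Set W | ∃ j, i < j ∧ H.Adj (f j) (f i) ∧
        S = {v : W | H.Adj (f j) v ∧ f.symm v ≤ i}}.ncard ≤ Δ)
    (hcolp : ∀ a b, H.Adj a b → c a ≠ c b)
    (himc : ((univ : Finset W).image c).card ≤ d+1)
    (hV : Nonempty V) :
    ∃ g : Fin (Fintype.card W) → V, Inv H G q d Δ x Vs f c g (Fintype.card W) := by
  classical
  have key : ∀ m, m ≤ Fintype.card W → ∃ g, Inv H G q d Δ x Vs f c g m := by
    intro m
    induction m with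
    | zero =>
      intro _
      refine ⟨fun _ => Classical.arbitrary V, ?_, ?_, ?_, ?_⟩
      · intro j k hj
        exact absurd hj (Nat.not_lt_zero _)
      · intro j k hj
        exact absurd hj (Nat.not_lt_zero _)
      · intro j hj
        exact absurd hj (Nat.not_lt_zero _)
      · intro k _ h1
        exfalso
        have hS0 : SS H f 0 k = ∅ := by
          ext j
          simp [SS]
        rw [hS0] at h1
        simp at h1
    | succ m ih =>
      intro hm1
      obtain ⟨g, hg⟩ := ih (by omega)
      exact step H G q d Δ x Vs f c hd hΔ hdx hxc hW1 hsize hbad' hdeg1 hdeg2 hcolp himc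
        g m (by omega) hg
  exact key _ le_rfl

end Main

lemma greedy {W : Type*} [Fintype W] (H : SimpleGraph W) (d : ℕ)
    (f : Fin (Fintype.card W) ≃ W)
    (hdeg : ∀ k, {j | j < k ∧ H.Adj (f j) (f k)}.ncard ≤ d) :
    ∃ cg : W → Fin (d+1), ∀ a b, H.Adj a b → cg a ≠ cg b := by
  classical
  have key : ∀ m : ℕ, ∃ cg : Fin (Fintype.card W) → Fin (d+1),
      ∀ j k : Fin (Fintype.card W), j < k → (k:ℕ) < m → H.Adj (f j) (f k) → cg j ≠ cg k := by
    intro m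
    induction m with
    | zero => exact ⟨fun _ => 0, fun j k _ hk => absurd hk (by omega)⟩
    | succ m ih =>
      obtain ⟨cg, hcg⟩ := ih
      by_cases hm : m < Fintype.card W
      · set i : Fin (Fintype.card W) := ⟨m, hm⟩
        set L : Finset (Fin (Fintype.card W)) := univ.filter (fun j => j < i ∧ H.Adj (f j) (f i)) with hL
        have hLd : L.card ≤ d := by
          have : (L : Set (Fin (Fintype.card W))) = {j | j < i ∧ H.Adj (f j) (f i)} := by ext j; simp [hL]
          rw [← Set.ncard_coe_finset, this]
          exact hdeg i
        have himg : (L.image cg).card < Fintype.card (Fin (d+1)) := by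
          calc (L.image cg).card ≤ L.card := Finset.card_image_le
          _ ≤ d := hLd
          _ < d + 1 := by omega
          _ = Fintype.card (Fin (d+1)) := by simp
        obtain ⟨col, hcol⟩ : ∃ col : Fin (d+1), col ∉ L.image cg := by
          by_contra h
          push_neg at h
          have : (univ : Finset (Fin (d+1))) ⊆ L.image cg := fun a _ => h a
          have := Finset.card_le_card this
          simp only [Finset.card_univ] at this
          omega
        refine ⟨Function.update cg i col, ?_⟩
        intro j k hjk hkm hadj
        have hjk' : (j:ℕ) < (k:ℕ) := hjk
        rcases Nat.lt_or_ge (k:ℕ) m with hk | hk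
        · have hji : j ≠ i := by intro h; rw [h] at hjk'; simp only [i] at hjk'; omega
          have hki : k ≠ i := by intro h; rw [h] at hk; simp only [i] at hk; omega
          rw [Function.update_of_ne hji, Function.update_of_ne hki]
          exact hcg j k hjk hk hadj
        · have hki : k = i := by
            apply Fin.ext; simp only [i, Fin.val_mk]; omega
          subst hki
          have hji : j ≠ i := by intro h; rw [h] at hjk; exact absurd hjk (lt_irrefl _)
          rw [Function.update_of_ne hji, Function.update_self]
          intro heq
          apply hcol
          rw [← heq]
          exact Finset.mem_image_of_mem cg (by simp [hL, hjk, hadj])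
      · refine ⟨cg, fun j k hjk hkm hadj => hcg j k hjk (by omega) hadj⟩
  obtain ⟨cg, hcg⟩ := key (Fintype.card W)
  refine ⟨fun w => cg (f.symm w), fun a b hadj hne => ?_⟩
  have hab : a ≠ b := H.ne_of_adj hadj
  have h1 : f.symm a ≠ f.symm b := fun h => hab (by simpa using congrArg f h)
  rcases lt_or_gt_of_ne h1 with h | h
  · exact hcg _ _ h (Fin.is_lt _) (by simpa using hadj) hne
  · exact hcg _ _ h (Fin.is_lt _) (by simpa using hadj.symm) hne.symm

lemma noAdj_of_zero {W : Type*} [Fintype W] {H : SimpleGraph W} {d Δ : ℕ}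
    (hH : DDeltaDegenerate H d Δ) (hd : d = 0 ∨ Δ = 0) : ∀ a b, ¬ H.Adj a b := by
  obtain ⟨f, hf⟩ := hH
  have key : ∀ j k : Fin (Fintype.card W), j < k → ¬ H.Adj (f j) (f k) := by
    intro j k hjk hadj
    rcases hd with hd | hd
    · have h1 : 0 < {j' | j' < k ∧ H.Adj (f j') (f k)}.ncard := by
        rw [Set.ncard_pos]
        exact ⟨j, hjk, hadj⟩
      have := (hf k).1
      omega
    · have h1 : 0 < {S : Set W | ∃ j' , j < j' ∧ H.Adj (f j') (f j) ∧
          S = {v : W | H.Adj (f j') v ∧ f.symm v ≤ j}}.ncard := by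
        rw [Set.ncard_pos]
        exact ⟨_, k, hjk, hadj.symm, rfl⟩
      have := (hf j).2
      omega
  intro a b hadj
  have hab : a ≠ b := H.ne_of_adj hadj
  have h1 : f.symm a ≠ f.symm b := fun h => hab (by simpa using congrArg f h)
  rcases lt_or_gt_of_ne h1 with h | h
  · exact key _ _ h (by simpa using hadj)
  · exact key _ _ h (by simpa using hadj.symm)


end Stmt10Aux



/-- Embedding lemma: let `H` be a `(d,Δ)`-degenerate graph with `n` vertices and chromatic number
at most `q`, and let `G` be a graph with vertex subsets `V_1,…,V_q` such that for each `i`,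
`|V_i| ≥ x ≥ 4n` and the number of `d`-element subsets `S ⊆ ⋃_{ℓ ≠ i} V_ℓ` with fewer than `x`
common neighbors in `V_i` is less than `(2Δ)^{-d} C(x,d)`. Then `G` contains a copy of `H`. -/
theorem stmt_10 {W V : Type*} [Fintype W] [Fintype V]
    (H : SimpleGraph W) (G : SimpleGraph V) (d Δ q n x : ℕ)
    (hn : Fintype.card W = n) (hH : DDeltaDegenerate H d Δ)
    (hchr : H.chromaticNumber ≤ (q : ℕ∞))
    (Vs : Fin q → Finset V) (hx : 4 * n ≤ x) (hsize : ∀ i, x ≤ (Vs i).card)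
    (hbad : ∀ i, (2 * Δ) ^ d *
        {S : Finset V | S.card = d ∧ (∀ v ∈ S, ∃ j, j ≠ i ∧ v ∈ Vs j) ∧
          {u : V | u ∈ Vs i ∧ ∀ v ∈ S, G.Adj u v}.ncard < x}.ncard
      < x.choose d) :
    ∃ f : W ↪ V, ∀ a b : W, H.Adj a b → G.Adj (f a) (f b) := by
  classical
  rcases Nat.eq_zero_or_pos n with hn0 | hn1
  · have hWe : IsEmpty W := by
      rw [← Fintype.card_eq_zero_iff]
      omega
    exact ⟨Function.Embedding.ofIsEmpty, fun a => (hWe.false a).elim⟩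
  have hcol : H.Colorable q := SimpleGraph.chromaticNumber_le_iff_colorable.mp hchr
  have hq : 0 < q := by
    by_contra h
    have hq0 : q = 0 := by omega
    subst hq0
    obtain ⟨C0⟩ := hcol
    have hWne : Nonempty W := by
      rw [← Fintype.card_pos_iff]
      omega
    exact Fin.elim0 (C0 hWne.some)
  have hK : 0 < x.choose d := lt_of_le_of_lt (Nat.zero_le _) (hbad ⟨0, hq⟩)
  have hdx : d ≤ x := by
    by_contra h
    rw [Nat.choose_eq_zero_of_lt (by omega)] at hK
    omega
  have hcardW : Fintype.card W ≤ Fintype.card V := by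
    have h1 := hsize ⟨0, hq⟩
    have h2 : (Vs ⟨0, hq⟩).card ≤ Fintype.card V := Finset.card_le_univ _
    omega
  have hV : Nonempty V := by
    rw [← Fintype.card_pos_iff]
    omega
  by_cases hdΔ : d = 0 ∨ Δ = 0
  · have hno := Stmt10Aux.noAdj_of_zero hH hdΔ
    obtain ⟨emb⟩ := Function.Embedding.nonempty_of_card_le hcardW
    exact ⟨emb, fun a b hab => absurd hab (hno a b)⟩
  push_neg at hdΔ
  have hd : 1 ≤ d := by omega
  have hΔ1 : 1 ≤ Δ := by omega
  obtain ⟨f, hf⟩ := hH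
  have hdeg1 : ∀ k, {j | j < k ∧ H.Adj (f j) (f k)}.ncard ≤ d := fun k => (hf k).1
  have hdeg2 : ∀ i : Fin (Fintype.card W), {S : Set W | ∃ j, i < j ∧ H.Adj (f j) (f i) ∧
      S = {v : W | H.Adj (f j) v ∧ f.symm v ≤ i}}.ncard ≤ Δ := fun i => (hf i).2
  obtain ⟨c, hcprop, himc⟩ : ∃ c : W → Fin q, (∀ a b, H.Adj a b → c a ≠ c b) ∧
      ((Finset.univ : Finset W).image c).card ≤ d+1 := by
    by_cases hqd : q ≤ d + 1
    · obtain ⟨C0⟩ := hcol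
      refine ⟨C0, fun a b hab => C0.valid hab, ?_⟩
      calc ((Finset.univ : Finset W).image C0).card ≤ Fintype.card (Fin q) :=
            Finset.card_le_univ _
      _ = q := Fintype.card_fin q
      _ ≤ d + 1 := hqd
    · push_neg at hqd
      obtain ⟨cg, hcg⟩ := Stmt10Aux.greedy H d f hdeg1
      have hle : d + 1 ≤ q := by omega
      refine ⟨fun w => Fin.castLE hle (cg w), fun a b hab h => hcg a b hab ?_, ?_⟩
      · exact Fin.castLE_injective hle h
      · have himg : ((Finset.univ : Finset W).image (fun w => Fin.castLE hle (cg w)))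
            = ((Finset.univ : Finset W).image cg).image (Fin.castLE hle) := by
          rw [Finset.image_image]
          rfl
        rw [himg]
        calc (((Finset.univ : Finset W).image cg).image (Fin.castLE hle)).card
            ≤ ((Finset.univ : Finset W).image cg).card := Finset.card_image_le
        _ ≤ Fintype.card (Fin (d+1)) := Finset.card_le_univ _
        _ = d + 1 := Fintype.card_fin _
  have hbad' : ∀ γ, (2*Δ)^d * (Stmt10Aux.Bd G q d x Vs γ).card < x.choose d := by
    intro γ
    have h := hbad γ
    have hinner : ∀ S : Finset V, {u : V | u ∈ Vs γ ∧ ∀ v ∈ S, G.Adj u v}.ncard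
        = ((Vs γ).filter (fun u => ∀ v ∈ S, G.Adj u v)).card := by
      intro S
      rw [← Set.ncard_coe_finset]
      congr 1
      ext u
      simp
    have hsets : {S : Finset V | S.card = d ∧ (∀ v ∈ S, ∃ j, j ≠ γ ∧ v ∈ Vs j) ∧
        {u : V | u ∈ Vs γ ∧ ∀ v ∈ S, G.Adj u v}.ncard < x}
        = ↑(Stmt10Aux.Bd G q d x Vs γ) := by
      ext S
      simp only [Set.mem_setOf_eq, Stmt10Aux.Bd, Finset.coe_filter, Finset.mem_univ, true_and]
      rw [hinner S]
    rw [hsets, Set.ncard_coe_finset] at h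
    exact h
  obtain ⟨g, hg⟩ := Stmt10Aux.main H G q d Δ x Vs f c hd hΔ1 hdx (by omega) (by omega)
    hsize hbad' hdeg1 hdeg2 hcprop himc hV
  obtain ⟨hinj, hadj, _, _⟩ := hg
  refine ⟨⟨fun w => g (f.symm w), ?_⟩, ?_⟩
  · intro a b hab
    have h1 := hinj (f.symm a) (f.symm b) (Fin.is_lt _) (Fin.is_lt _) hab
    have := congrArg f h1
    simpa using this
  · intro a b hab
    exact hadj (f.symm a) (f.symm b) (Fin.is_lt _) (Fin.is_lt _) (by simpa using hab)
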